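/- Let d, m ∈ ℕ with d ≥ 1 and m ≥ 1, let u₀ ∈ ℝ and h > 0, let x₁,…,x_m ∈ [u₀ − h, u₀ + h], and let φ₁,…,φ_m : ℝ → ℝ be differentiable at u₀ and satisfy the degree-d reproduction property on a neighborhood of u₀: for every real polynomial p of degree ≤ d and every u in an open interval containing u₀, Σⱼ p(xⱼ)·φⱼ(u) = p(u). Let Λ′ = Σⱼ |φⱼ′(u₀)|. Let f : ℝ → ℝ be (d+1)-times continuously differentiable on [u₀ − h, u₀ + h] with |f^{(d+1)}(x)| ≤ M there. Then |Σⱼ f(xⱼ)·φⱼ′(u₀) − f′(u₀)| ≤ Λ′·M·h^{d+1}/(d+1)!. -/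

import Mathlib

open BigOperators

/-- Two-sided Taylor remainder bound with center `c` anywhere in `[A, B]`. -/
lemma taylor_center_remainder_bound {f : ℝ → ℝ} {A B M : ℝ} (hAB : A < B) {d : ℕ}
    (hf : ContDiffOn ℝ (d + 1) f (Set.Icc A B))
    (hM : ∀ y ∈ Set.Icc A B, |iteratedDerivWithin (d + 1) f (Set.Icc A B) y| ≤ M)
    {c x : ℝ} (hc : c ∈ Set.Icc A B) (hx : x ∈ Set.Icc A B) :
    |f x - taylorWithinEval f d (Set.Icc A B) c x| ≤
      M * |x - c| ^ (d + 1) / (Nat.factorial (d + 1)) := by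
  set S := Set.Icc A B with hS
  have hM0 : (0 : ℝ) ≤ M := le_trans (abs_nonneg _) (hM c hc)
  have hfactpos : (0 : ℝ) < (Nat.factorial (d + 1) : ℝ) := by positivity
  have hfacteq : ((d + 1).factorial : ℝ) = (d + 1) * d.factorial := by
    rw [Nat.factorial_succ]; push_cast; ring
  have hud : UniqueDiffOn ℝ S := uniqueDiffOn_Icc hAB
  have hf' : DifferentiableOn ℝ (iteratedDerivWithin d f S) S :=
    hf.differentiableOn_iteratedDerivWithin (mod_cast d.lt_succ_self) hud
  set g : ℝ → ℝ := fun y => taylorWithinEval f d S y x with hg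
  have hgderiv : ∀ t ∈ S, HasDerivWithinAt g
      (((d.factorial : ℝ)⁻¹ * (x - t) ^ d) • iteratedDerivWithin (d + 1) f S t) S t :=
    fun t ht => hasDerivWithinAt_taylorWithinEval_at_Icc x hAB ht hf.of_succ hf'
  have hgcont : ContinuousOn g S := continuousOn_taylorWithinEval hud hf.of_succ
  have hgx : g x = f x := taylorWithinEval_self f d S x
  have hnhds : ∀ y ∈ S, y < B → S ∈ nhdsWithin y (Set.Ici y) := by
    intro y hy hyB
    rw [mem_nhdsWithin]
    exact ⟨Set.Iio B, isOpen_Iio, hyB, fun t ⟨ht1, ht2⟩ => ⟨le_trans hy.1 ht2, le_of_lt ht1⟩⟩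
  rcases le_total c x with hcx | hxc
  · -- c ≤ x : integrate from c to x
    have habs : |x - c| = x - c := abs_of_nonneg (by linarith)
    set Bf : ℝ → ℝ := fun y =>
      M / (Nat.factorial (d + 1)) * ((x - c) ^ (d + 1) - (x - y) ^ (d + 1)) with hBf
    have hBd : ∀ y : ℝ, HasDerivAt Bf
        (M / (Nat.factorial (d + 1)) * ((d + 1) * (x - y) ^ d)) y := by
      intro y
      have h2 := ((monomial_has_deriv_aux y x d).const_sub
        ((x - c) ^ (d + 1))).const_mul (M / ((d + 1).factorial : ℝ))
      have hval : M / ((d + 1).factorial : ℝ) * -(-((d : ℝ) + 1) * (x - y) ^ d) =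
          M / ((d + 1).factorial : ℝ) * (((d : ℝ) + 1) * (x - y) ^ d) := by ring
      exact hval ▸ h2
    have hcont : ContinuousOn (fun y => g y - g c) (Set.Icc c x) :=
      (hgcont.mono (Set.Icc_subset_Icc hc.1 hx.2)).sub continuousOn_const
    have hder : ∀ y ∈ Set.Ico c x, HasDerivWithinAt (fun y => g y - g c)
        (((d.factorial : ℝ)⁻¹ * (x - y) ^ d) • iteratedDerivWithin (d + 1) f S y)
        (Set.Ici y) y := by
      intro y hy
      have hyS : y ∈ S := ⟨le_trans hc.1 hy.1, le_of_lt (lt_of_lt_of_le hy.2 hx.2)⟩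
      exact ((hgderiv y hyS).mono_of_mem_nhdsWithin
        (hnhds y hyS (lt_of_lt_of_le hy.2 hx.2))).sub_const (g c)
    have ha0 : ‖g c - g c‖ ≤ Bf c := by simp [hBf]
    have hbound : ∀ y ∈ Set.Ico c x,
        ‖((d.factorial : ℝ)⁻¹ * (x - y) ^ d) • iteratedDerivWithin (d + 1) f S y‖ ≤
          M / (Nat.factorial (d + 1)) * ((d + 1) * (x - y) ^ d) := by
      intro y hy
      have hyS : y ∈ S := ⟨le_trans hc.1 hy.1, le_of_lt (lt_of_lt_of_le hy.2 hx.2)⟩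
      have hxy : (0:ℝ) ≤ x - y := by linarith [hy.2]
      rw [norm_smul, Real.norm_eq_abs, Real.norm_eq_abs,
        abs_of_nonneg (by positivity : (0:ℝ) ≤ (d.factorial : ℝ)⁻¹ * (x - y) ^ d)]
      have h3 : (d.factorial : ℝ)⁻¹ * (x - y) ^ d * |iteratedDerivWithin (d + 1) f S y| ≤
          (d.factorial : ℝ)⁻¹ * (x - y) ^ d * M :=
        mul_le_mul_of_nonneg_left (hM y hyS) (by positivity)
      refine h3.trans_eq ?_
      rw [div_mul_eq_mul_div, hfacteq]
      field_simp
    have hF := image_norm_le_of_norm_deriv_right_le_deriv_boundary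
      hcont hder ha0 hBd hbound (x := x) ⟨hcx, le_refl x⟩
    rw [hgx, Real.norm_eq_abs] at hF
    refine hF.trans_eq ?_
    rw [habs, hBf]
    simp only [sub_self]
    rw [zero_pow (by omega)]
    ring
  · -- x ≤ c : integrate from x to c
    have habs : |x - c| = c - x := by rw [abs_sub_comm]; exact abs_of_nonneg (by linarith)
    set Bf : ℝ → ℝ := fun y => M / (Nat.factorial (d + 1)) * (y - x) ^ (d + 1) with hBf
    have hBd : ∀ y : ℝ, HasDerivAt Bf
        (M / (Nat.factorial (d + 1)) * ((d + 1) * (y - x) ^ d)) y := by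
      intro y
      have h2 := (((hasDerivAt_id y).sub_const x).pow (d + 1)).const_mul
        (M / ((d + 1).factorial : ℝ))
      simp only [id_eq, Pi.pow_apply] at h2
      have hv : M / ((d + 1).factorial : ℝ) * (((d + 1 : ℕ) : ℝ) * (y - x) ^ (d + 1 - 1) * 1) =
          M / ((d + 1).factorial : ℝ) * (((d : ℝ) + 1) * (y - x) ^ d) := by
        rw [Nat.add_sub_cancel]
        push_cast
        ring
      rw [hv] at h2
      exact h2
    have hcont : ContinuousOn (fun y => g y - g x) (Set.Icc x c) :=
      (hgcont.mono (Set.Icc_subset_Icc hx.1 hc.2)).sub continuousOn_const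
    have hder : ∀ y ∈ Set.Ico x c, HasDerivWithinAt (fun y => g y - g x)
        (((d.factorial : ℝ)⁻¹ * (x - y) ^ d) • iteratedDerivWithin (d + 1) f S y)
        (Set.Ici y) y := by
      intro y hy
      have hyS : y ∈ S := ⟨le_trans hx.1 hy.1, le_of_lt (lt_of_lt_of_le hy.2 hc.2)⟩
      exact ((hgderiv y hyS).mono_of_mem_nhdsWithin
        (hnhds y hyS (lt_of_lt_of_le hy.2 hc.2))).sub_const (g x)
    have ha0 : ‖g x - g x‖ ≤ Bf x := by simp [hBf]
    have hbound : ∀ y ∈ Set.Ico x c,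
        ‖((d.factorial : ℝ)⁻¹ * (x - y) ^ d) • iteratedDerivWithin (d + 1) f S y‖ ≤
          M / (Nat.factorial (d + 1)) * ((d + 1) * (y - x) ^ d) := by
      intro y hy
      have hyS : y ∈ S := ⟨le_trans hx.1 hy.1, le_of_lt (lt_of_lt_of_le hy.2 hc.2)⟩
      have hxy : (0:ℝ) ≤ y - x := by linarith [hy.1]
      rw [norm_smul, Real.norm_eq_abs, Real.norm_eq_abs, abs_mul, abs_pow, abs_sub_comm,
        abs_of_nonneg hxy, abs_of_nonneg (by positivity : (0:ℝ) ≤ ((d.factorial : ℝ)⁻¹))]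
      have h3 : (d.factorial : ℝ)⁻¹ * (y - x) ^ d * |iteratedDerivWithin (d + 1) f S y| ≤
          (d.factorial : ℝ)⁻¹ * (y - x) ^ d * M :=
        mul_le_mul_of_nonneg_left (hM y hyS) (by positivity)
      refine h3.trans_eq ?_
      rw [div_mul_eq_mul_div, hfacteq]
      field_simp
    have hF := image_norm_le_of_norm_deriv_right_le_deriv_boundary
      hcont hder ha0 hBd hbound (x := c) ⟨hxc, le_refl c⟩
    rw [Real.norm_eq_abs, abs_sub_comm, hgx] at hF
    refine hF.trans_eq ?_
    rw [habs, hBf]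
    ring

/-- derivative-approximation estimate for a degree-`d`
reproducing family on a neighborhood of the stencil center. -/
theorem glp_derivative_approximation (d m : ℕ) (hd : 1 ≤ d) (hm : 1 ≤ m)
    (u₀ h : ℝ) (hh : 0 < h)
    (x : Fin m → ℝ) (hx : ∀ j, x j ∈ Set.Icc (u₀ - h) (u₀ + h))
    (φ : Fin m → ℝ → ℝ) (hdiff : ∀ j, DifferentiableAt ℝ (φ j) u₀)
    (a b : ℝ) (ha : a < u₀) (hb : u₀ < b)
    (hrep : ∀ p : Polynomial ℝ, p.natDegree ≤ d → ∀ u ∈ Set.Ioo a b,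
      ∑ j, p.eval (x j) * φ j u = p.eval u)
    (Λ' : ℝ) (hΛ' : Λ' = ∑ j, |deriv (φ j) u₀|)
    (f : ℝ → ℝ) (M : ℝ)
    (hf : ContDiffOn ℝ (d + 1) f (Set.Icc (u₀ - h) (u₀ + h)))
    (hM : ∀ y ∈ Set.Icc (u₀ - h) (u₀ + h),
      |iteratedDerivWithin (d + 1) f (Set.Icc (u₀ - h) (u₀ + h)) y| ≤ M) :
    |∑ j, f (x j) * deriv (φ j) u₀ - deriv f u₀| ≤
      Λ' * M * h ^ (d + 1) / (Nat.factorial (d + 1)) := by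
  have hAB : u₀ - h < u₀ + h := by linarith
  set S := Set.Icc (u₀ - h) (u₀ + h) with hSdef
  have hu₀S : u₀ ∈ S := ⟨by linarith, by linarith⟩
  have hSnhds : S ∈ nhds u₀ := Icc_mem_nhds (by linarith) (by linarith)
  have hud : UniqueDiffOn ℝ S := uniqueDiffOn_Icc hAB
  have hM0 : (0 : ℝ) ≤ M := le_trans (abs_nonneg _) (hM u₀ hu₀S)
  -- the Taylor polynomial of f at u₀ as a `Polynomial ℝ`
  set p : Polynomial ℝ := ∑ k ∈ Finset.range (d + 1),
      Polynomial.C ((k.factorial : ℝ)⁻¹ * iteratedDerivWithin k f S u₀) *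
        (Polynomial.X - Polynomial.C u₀) ^ k with hpdef
  have hpeval : ∀ t, p.eval t = taylorWithinEval f d S u₀ t := by
    intro t
    rw [taylor_within_apply, hpdef, Polynomial.eval_finset_sum]
    refine Finset.sum_congr rfl fun k _ => ?_
    simp [smul_eq_mul]
    ring
  have hpdeg : p.natDegree ≤ d := by
    refine Polynomial.natDegree_sum_le_of_forall_le _ _ fun k hk => ?_
    refine le_trans (Polynomial.natDegree_C_mul_le _ _) ?_
    rw [Polynomial.natDegree_pow, Polynomial.natDegree_X_sub_C, mul_one]
    exact Nat.lt_succ_iff.mp (Finset.mem_range.mp hk)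
  -- the derivative of p at u₀ equals deriv f u₀
  have hpd : Polynomial.eval u₀ (Polynomial.derivative p) = deriv f u₀ := by
    rw [hpdef, map_sum, Polynomial.eval_finset_sum]
    have hterm : ∀ k ∈ Finset.range (d + 1),
        Polynomial.eval u₀ (Polynomial.derivative
          (Polynomial.C ((k.factorial : ℝ)⁻¹ * iteratedDerivWithin k f S u₀) *
            (Polynomial.X - Polynomial.C u₀) ^ k)) =
        if k = 1 then iteratedDerivWithin 1 f S u₀ else 0 := by
      intro k _
      rw [Polynomial.derivative_C_mul, Polynomial.derivative_pow, Polynomial.eval_mul]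
      rcases Nat.eq_zero_or_pos k with rfl | hk0
      · simp
      rcases eq_or_ne k 1 with rfl | hk1
      · simp
      · have h2 : 2 ≤ k := by omega
        have : Polynomial.eval u₀ ((Polynomial.X - Polynomial.C u₀) ^ (k - 1)) = 0 := by
          rw [Polynomial.eval_pow]
          simp [zero_pow (by omega : k - 1 ≠ 0)]
        simp [this, hk1]
    rw [Finset.sum_congr rfl hterm, Finset.sum_ite_eq' (Finset.range (d + 1)) 1]
    have h1mem : 1 ∈ Finset.range (d + 1) := Finset.mem_range.mpr (by omega)
    rw [if_pos h1mem, iteratedDerivWithin_one, derivWithin_of_mem_nhds hSnhds]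
  -- reproduction gives : ∑ j, p(xⱼ) φⱼ'(u₀) = deriv f u₀
  have hkey : ∑ j, p.eval (x j) * deriv (φ j) u₀ = deriv f u₀ := by
    have hEv : (fun u => ∑ j, p.eval (x j) * φ j u) =ᶠ[nhds u₀] fun u => p.eval u := by
      filter_upwards [isOpen_Ioo.mem_nhds (Set.mem_Ioo.mpr ⟨ha, hb⟩)] with u hu
      exact hrep p hpdeg u hu
    have hD : HasDerivAt (fun u => ∑ j, p.eval (x j) * φ j u)
        (∑ j, p.eval (x j) * deriv (φ j) u₀) u₀ :=
      HasDerivAt.fun_sum fun j _ => ((hdiff j).hasDerivAt).const_mul _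
    rw [← hD.deriv, hEv.deriv_eq, Polynomial.deriv, hpd]
  -- Taylor remainder bound at the stencil points
  have hrem : ∀ j, |f (x j) - p.eval (x j)| ≤ M * h ^ (d + 1) / (Nat.factorial (d + 1)) := by
    intro j
    rw [hpeval]
    refine le_trans (taylor_center_remainder_bound hAB hf hM hu₀S (hx j)) ?_
    have h1 : |x j - u₀| ≤ h := by
      rw [abs_le]; constructor <;> [linarith [(hx j).1]; linarith [(hx j).2]]
    gcongr
  -- combine
  have hsplit : ∑ j, f (x j) * deriv (φ j) u₀ - deriv f u₀ =
      ∑ j, (f (x j) - p.eval (x j)) * deriv (φ j) u₀ := by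
    rw [← hkey, ← Finset.sum_sub_distrib]
    refine Finset.sum_congr rfl fun j _ => ?_
    ring
  rw [hsplit]
  calc |∑ j, (f (x j) - p.eval (x j)) * deriv (φ j) u₀|
      ≤ ∑ j, |(f (x j) - p.eval (x j)) * deriv (φ j) u₀| := Finset.abs_sum_le_sum_abs _ _
    _ ≤ ∑ j, M * h ^ (d + 1) / (Nat.factorial (d + 1)) * |deriv (φ j) u₀| := by
        refine Finset.sum_le_sum fun j _ => ?_
        rw [abs_mul]
        exact mul_le_mul_of_nonneg_right (hrem j) (abs_nonneg _)
    _ = Λ' * M * h ^ (d + 1) / (Nat.factorial (d + 1)) := by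
        rw [← Finset.mul_sum, ← hΛ']
        ring
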